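/- For every λ ≥ −1/2 and every n ∈ ℕ there is a constant C = C(λ,n) such that the n-th derivative of the normalized Bessel function satisfies |j_λ^{(n)}(t)| ≤ C·(1+t)^{−(λ+1/2)} for all t ≥ 0. -/

import Mathlib

noncomputable section

/-- The normalized Bessel function
`j_λ(t) = Γ(λ+1) ∑_{n=0}^∞ (−1)^n (t/2)^{2n}/(n! Γ(n+λ+1))`. -/
def besselJNorm (lam : ℝ) (t : ℝ) : ℝ :=
  Real.Gamma (lam + 1) *
    ∑' n : ℕ, (-1 : ℝ) ^ n * (t / 2) ^ (2 * n) / (Nat.factorial n * Real.Gamma (n + lam + 1))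

namespace BesselAux

/-- coefficient of `t^(2k)` in `besselJNorm lam`. -/
def c (lam : ℝ) (k : ℕ) : ℝ :=
  Real.Gamma (lam + 1) * ((-1 : ℝ) ^ k / (Nat.factorial k * Real.Gamma (k + lam + 1) * 4 ^ k))

/-- coefficient of `t^m`. -/
def a (lam : ℝ) (m : ℕ) : ℝ := if m % 2 = 0 then c lam (m / 2) else 0

variable {lam : ℝ} (hlam : -(1 / 2 : ℝ) ≤ lam)

include hlam in
lemma arg_pos (k : ℕ) : (0 : ℝ) < k + lam + 1 := by
  have : (0:ℝ) ≤ (k:ℝ) := Nat.cast_nonneg k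
  linarith

include hlam in
lemma Gamma_arg_pos (k : ℕ) : 0 < Real.Gamma (k + lam + 1) :=
  Real.Gamma_pos_of_pos (arg_pos hlam k)

include hlam in
lemma Gamma_ge (k : ℕ) :
    Real.Gamma (lam + 1) * (Nat.factorial k) / 2 ^ k ≤ Real.Gamma (k + lam + 1) := by
  induction k with
  | zero => simp
  | succ k ih =>
      have h1 : Real.Gamma ((k:ℝ) + 1 + lam + 1) = ((k:ℝ) + lam + 1) * Real.Gamma (k + lam + 1) := by
        have := Real.Gamma_add_one (ne_of_gt (arg_pos hlam k))
        rw [show ((k:ℝ) + 1 + lam + 1) = ((k:ℝ) + lam + 1) + 1 by ring, this]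
      have hk2 : ((k:ℝ) + 1) / 2 ≤ (k:ℝ) + lam + 1 := by nlinarith [Nat.cast_nonneg (α := ℝ) k]
      have hG := Gamma_arg_pos hlam k
      have hfac : (0:ℝ) < (Nat.factorial k : ℝ) := by positivity
      have hGl : (0:ℝ) ≤ Real.Gamma (lam + 1) := le_of_lt (Real.Gamma_pos_of_pos (by linarith))
      calc Real.Gamma (lam + 1) * (Nat.factorial (k+1)) / 2 ^ (k+1)
          = (((k:ℝ)+1)/2) * (Real.Gamma (lam + 1) * (Nat.factorial k) / 2 ^ k) := by
            push_cast [Nat.factorial_succ]; ring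
        _ ≤ ((k:ℝ) + lam + 1) * Real.Gamma (k + lam + 1) := by
            apply mul_le_mul hk2 ih (by positivity) (by linarith)
        _ = Real.Gamma ((k:ℝ) + 1 + lam + 1) := h1.symm
        _ = Real.Gamma (((k+1 : ℕ):ℝ) + lam + 1) := by push_cast; ring_nf

include hlam in
lemma c_abs_le (k : ℕ) : |c lam k| ≤ 1 / (Nat.factorial k) := by
  have hG := Gamma_arg_pos hlam k
  have hGl : (0:ℝ) < Real.Gamma (lam + 1) := Real.Gamma_pos_of_pos (by linarith)
  have hge := Gamma_ge hlam k
  have hfac : (0:ℝ) < (Nat.factorial k : ℝ) := by positivity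
  have h4 : (0:ℝ) < 4 ^ k := by positivity
  have h2 : (0:ℝ) < 2 ^ k := by positivity
  have habs : |c lam k| = Real.Gamma (lam+1) / (Nat.factorial k * Real.Gamma (k + lam + 1) * 4 ^ k) := by
    rw [c, abs_mul, abs_of_pos hGl, abs_div, abs_pow, abs_neg, abs_one, one_pow]
    congr 1
    rw [abs_of_pos (by positivity), one_div]
  rw [habs, div_le_div_iff₀ (by positivity) hfac]
  have h24 : (2:ℝ)^k ≤ 4^k := by
    apply pow_le_pow_left₀ (by norm_num) (by norm_num)
  calc Real.Gamma (lam+1) * (Nat.factorial k)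
      = (Real.Gamma (lam + 1) * (Nat.factorial k) / 2 ^ k) * 2 ^ k := by field_simp
    _ ≤ Real.Gamma (k + lam + 1) * 4 ^ k := by
        apply mul_le_mul hge h24 (le_of_lt h2) (le_of_lt hG)
    _ ≤ 1 * (Nat.factorial k * Real.Gamma (k + lam + 1) * 4 ^ k) := by
        rw [one_mul]
        have h1le : (1:ℝ) ≤ (Nat.factorial k : ℝ) := by
          exact_mod_cast Nat.one_le_iff_ne_zero.mpr (Nat.factorial_ne_zero k)
        nlinarith [mul_pos hG h4]

include hlam in
lemma summable_c (x : ℝ) : Summable (fun k => |c lam k| * |x| ^ (2 * k)) := by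
  apply Summable.of_nonneg_of_le (fun k => by positivity)
    (f := fun k => (x^2)^k / (Nat.factorial k))
  · intro k
    have h1 : |x| ^ (2*k) = (x^2)^k := by
      rw [pow_mul, sq_abs]
    rw [h1]
    have := c_abs_le hlam k
    have hx : (0:ℝ) ≤ (x^2)^k := by positivity
    calc |c lam k| * (x^2)^k ≤ (1 / (Nat.factorial k)) * (x^2)^k :=
          mul_le_mul_of_nonneg_right this hx
      _ = (x^2)^k / (Nat.factorial k) := by ring
  · exact Real.summable_pow_div_factorial (x^2)

include hlam in
lemma hasSum_c (t : ℝ) : HasSum (fun k => c lam k * t ^ (2 * k)) (besselJNorm lam t) := by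
  have hsum : Summable (fun k => c lam k * t ^ (2 * k)) := by
    apply Summable.of_abs
    apply (summable_c hlam t).congr
    intro k
    rw [abs_mul, abs_pow]
  have heq : ∀ k : ℕ, c lam k * t ^ (2*k)
      = Real.Gamma (lam + 1) * ((-1 : ℝ) ^ k * (t / 2) ^ (2 * k) / (Nat.factorial k * Real.Gamma (k + lam + 1))) := by
    intro k
    have hG := Gamma_arg_pos hlam k
    have hfac : (0:ℝ) < (Nat.factorial k : ℝ) := by positivity
    rw [c, div_pow, show ((2:ℝ))^(2*k) = 4^k by rw [pow_mul]; norm_num]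
    field_simp
  have : besselJNorm lam t = ∑' k, c lam k * t ^ (2*k) := by
    rw [besselJNorm, ← tsum_mul_left]
    exact tsum_congr fun k => (heq k).symm
  rw [this]
  exact hsum.hasSum

include hlam in
lemma hasSum_a (t : ℝ) : HasSum (fun m => a lam m * t ^ m) (besselJNorm lam t) := by
  have hinj : Function.Injective (fun k : ℕ => 2 * k) := fun x y h => by dsimp at h; omega
  rw [← Function.Injective.hasSum_iff hinj]
  · have : (fun m => a lam m * t ^ m) ∘ (fun k : ℕ => 2 * k) = fun k => c lam k * t ^ (2*k) := by
      funext k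
      simp only [Function.comp_apply, a]
      have h1 : 2 * k % 2 = 0 := by omega
      have h2 : 2 * k / 2 = k := by omega
      rw [if_pos h1, h2]
    rw [this]
    exact hasSum_c hlam t
  · intro m hm
    have : m % 2 = 1 := by
      rcases Nat.even_or_odd m with h | h
      · exfalso; obtain ⟨k, hk⟩ := h; exact hm ⟨k, by dsimp; omega⟩
      · obtain ⟨k, hk⟩ := h; omega
    simp [a, this]

/-! ### The power series -/

def pSeries (lam : ℝ) : FormalMultilinearSeries ℝ ℝ ℝ :=
  fun n => ContinuousMultilinearMap.mkPiRing ℝ (Fin n) (a lam n)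

lemma pSeries_apply (lam : ℝ) (n : ℕ) (y : ℝ) :
    pSeries lam n (fun _ => y) = a lam n * y ^ n := by
  simp [pSeries, ContinuousMultilinearMap.mkPiRing_apply, Finset.prod_const, smul_eq_mul]
  ring

include hlam in
lemma summable_abs_a (r : ℝ) : Summable (fun m => |a lam m| * |r| ^ m) := by
  have hinj : Function.Injective (fun k : ℕ => 2 * k) := fun x y h => by dsimp at h; omega
  rw [← Function.Injective.summable_iff hinj]
  · have : (fun m => |a lam m| * |r| ^ m) ∘ (fun k : ℕ => 2 * k)
        = fun k => |c lam k| * |r| ^ (2 * k) := by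
      funext k
      simp only [Function.comp_apply, a]
      have h1 : 2 * k % 2 = 0 := by omega
      have h2 : 2 * k / 2 = k := by omega
      rw [if_pos h1, h2]
    rw [this]
    exact summable_c hlam r
  · intro m hm
    have : m % 2 = 1 := by
      rcases Nat.even_or_odd m with h | h
      · exfalso; obtain ⟨k, hk⟩ := h; exact hm ⟨k, by dsimp; omega⟩
      · obtain ⟨k, hk⟩ := h; omega
    simp [a, this]

include hlam in
lemma hbj : HasFPowerSeriesOnBall (besselJNorm lam) (pSeries lam) 0 ⊤ where
  r_le := by
    rw [(pSeries lam).radius_eq_top_of_summable_norm]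
    intro r
    have := summable_abs_a hlam (r : ℝ)
    apply this.congr
    intro n
    simp [pSeries, ContinuousMultilinearMap.norm_mkPiRing, Real.norm_eq_abs,
      abs_of_nonneg r.coe_nonneg]
  r_pos := by simp
  hasSum := by
    intro y _
    rw [zero_add]
    have heq : (fun n => (pSeries lam n) fun _ => y) = fun m => a lam m * y ^ m :=
      funext fun n => pSeries_apply lam n y
    rw [heq]
    exact hasSum_a hlam y

lemma clm_eval (M : ℝ →L[ℝ] ℝ) (y : ℝ) : M y = y * M 1 := by
  have h := M.map_smul y 1
  simpa using h

/-! ### Derivatives through the power series -/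

include hlam in
lemma contDiff_j : ContDiff ℝ ⊤ (besselJNorm lam) := by
  rw [contDiff_iff_contDiffAt]
  intro x
  exact ((hbj hlam).analyticAt_of_mem (by simp)).contDiffAt

include hlam in
lemma hasSum_yderiv (y : ℝ) :
    HasSum (fun n : ℕ => ((n:ℝ) + 1) * a lam (n+1) * y ^ (n+1))
      (y * deriv (besselJNorm lam) y) := by
  have h1 := ((hbj hlam).fderiv).hasSum (y := y) (by simp)
  rw [zero_add] at h1
  have h2 := h1.mapL (ContinuousLinearMap.apply ℝ ℝ y)
  have hterm : ∀ n : ℕ, (ContinuousLinearMap.apply ℝ ℝ y) ((pSeries lam).derivSeries n fun _ => y)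
      = ((n:ℝ) + 1) * a lam (n+1) * y ^ (n+1) := by
    intro n
    have := (pSeries lam).derivSeries_apply_diag n y
    simp only [ContinuousLinearMap.apply_apply, this, pSeries_apply, nsmul_eq_mul]
    push_cast
    ring
  have hsum : (ContinuousLinearMap.apply ℝ ℝ y) (fderiv ℝ (besselJNorm lam) y)
      = y * deriv (besselJNorm lam) y := by
    simp only [ContinuousLinearMap.apply_apply]
    rw [clm_eval, fderiv_apply_one_eq_deriv]
  rw [hsum] at h2
  exact (funext hterm) ▸ h2

def qSeries (lam : ℝ) : FormalMultilinearSeries ℝ ℝ ℝ :=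
  (ContinuousLinearMap.apply ℝ ℝ (1:ℝ)).compFormalMultilinearSeries (pSeries lam).derivSeries

include hlam in
lemma hbj' : HasFPowerSeriesOnBall (deriv (besselJNorm lam)) (qSeries lam) 0 ⊤ := by
  have h := (ContinuousLinearMap.apply ℝ ℝ (1:ℝ)).comp_hasFPowerSeriesOnBall ((hbj hlam).fderiv)
  apply h.congr
  intro z _
  simp [Function.comp, ContinuousLinearMap.apply_apply, fderiv_apply_one_eq_deriv]

include hlam in
lemma hasSum_y2deriv2 (y : ℝ) :
    HasSum (fun n : ℕ => ((n:ℝ) + 1) * ((n:ℝ) + 2) * a lam (n+2) * y ^ (n+2))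
      (y^2 * deriv (deriv (besselJNorm lam)) y) := by
  have h1 := ((hbj' hlam).fderiv).hasSum (y := y) (by simp)
  rw [zero_add] at h1
  have h2 := (h1.mapL (ContinuousLinearMap.apply ℝ ℝ y)).mul_left y
  have hterm : ∀ n : ℕ,
      y * (ContinuousLinearMap.apply ℝ ℝ y) ((qSeries lam).derivSeries n fun _ => y)
      = ((n:ℝ) + 1) * ((n:ℝ) + 2) * a lam (n+2) * y ^ (n+2) := by
    intro n
    have hd := (qSeries lam).derivSeries_apply_diag n y
    simp only [ContinuousLinearMap.apply_apply, hd, nsmul_eq_mul]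
    have hq : (qSeries lam) (n+1) (fun _ => y)
        = (pSeries lam).derivSeries (n+1) (fun _ => y) 1 := by
      simp [qSeries, ContinuousLinearMap.compFormalMultilinearSeries_apply,
        ContinuousLinearMap.compContinuousMultilinearMap_coe, ContinuousLinearMap.apply_apply]
    have hd2 := (pSeries lam).derivSeries_apply_diag (n+1) y
    rw [clm_eval ((pSeries lam).derivSeries (n+1) (fun _ => y)) y, pSeries_apply,
      nsmul_eq_mul] at hd2
    push_cast at hd2
    rw [hq]
    push_cast
    rw [mul_left_comm, hd2]
    ring
  have hsum : y * (ContinuousLinearMap.apply ℝ ℝ y) (fderiv ℝ (deriv (besselJNorm lam)) y)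
      = y^2 * deriv (deriv (besselJNorm lam)) y := by
    simp only [ContinuousLinearMap.apply_apply]
    rw [clm_eval, fderiv_apply_one_eq_deriv]
    ring
  rw [hsum] at h2
  exact (funext hterm) ▸ h2

/-! ### Coefficient recurrences -/

include hlam in
lemma crec (k : ℕ) : (4*((k:ℝ)+1)*((k:ℝ)+lam+1)) * c lam (k+1) = - c lam k := by
  have hG : Real.Gamma (((k+1:ℕ):ℝ) + lam + 1) = ((k:ℝ)+lam+1) * Real.Gamma ((k:ℝ) + lam + 1) := by
    rw [show (((k+1:ℕ):ℝ) + lam + 1) = ((k:ℝ) + lam + 1) + 1 by push_cast; ring,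
      Real.Gamma_add_one (ne_of_gt (arg_pos hlam k))]
  have hGpos := Gamma_arg_pos hlam k
  have hG0 : Real.Gamma ((k:ℝ) + lam + 1) ≠ 0 := ne_of_gt hGpos
  have hfac : ((Nat.factorial k : ℝ)) ≠ 0 := by positivity
  have h4 : ((4:ℝ) ^ k) ≠ 0 := by positivity
  have hkl : ((k:ℝ) + lam + 1) ≠ 0 := ne_of_gt (arg_pos hlam k)
  have hk1 : ((k:ℝ) + 1) ≠ 0 := by positivity
  simp only [c, hG]
  rw [show Nat.factorial (k+1) = (k+1) * Nat.factorial k from rfl]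
  push_cast
  field_simp
  ring

include hlam in
lemma crec2 (k : ℕ) : 2*((k:ℝ)+1) * c lam (k+1) = -(1/(2*(lam+1))) * c (lam+1) k := by
  have hl1 : (0:ℝ) < lam + 1 := by linarith
  have hG : Real.Gamma (((k+1:ℕ):ℝ) + lam + 1) = Real.Gamma ((k:ℝ) + (lam+1) + 1) := by
    congr 1; push_cast; ring
  have hG2 : Real.Gamma (lam + 1 + 1) = (lam+1) * Real.Gamma (lam + 1) :=
    Real.Gamma_add_one (ne_of_gt hl1)
  have hGpos : 0 < Real.Gamma ((k:ℝ) + (lam+1) + 1) := Real.Gamma_pos_of_pos (by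
    have : (0:ℝ) ≤ (k:ℝ) := Nat.cast_nonneg k
    linarith)
  have hG0 : Real.Gamma ((k:ℝ) + (lam+1) + 1) ≠ 0 := ne_of_gt hGpos
  have hfac : ((Nat.factorial k : ℝ)) ≠ 0 := by positivity
  have h4 : ((4:ℝ) ^ k) ≠ 0 := by positivity
  have hk1 : ((k:ℝ) + 1) ≠ 0 := by positivity
  have hl0 : (lam + 1 : ℝ) ≠ 0 := ne_of_gt hl1
  have hGl : Real.Gamma (lam + 1) ≠ 0 := ne_of_gt (Real.Gamma_pos_of_pos hl1)
  simp only [c, hG, hG2]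
  rw [show Nat.factorial (k+1) = (k+1) * Nat.factorial k from rfl]
  push_cast
  field_simp
  ring

include hlam in
lemma aODE (n : ℕ) : ((n:ℝ)+1)*((n:ℝ)+2) * a lam (n+2)
    + (2*lam+1) * (((n:ℝ)+2) * a lam (n+2)) + a lam n = 0 := by
  rcases Nat.even_or_odd n with ⟨k, hk⟩ | hodd
  · have hn : n = 2 * k := by omega
    subst hn
    have e1 : a lam (2*k) = c lam k := by
      simp only [a]; rw [if_pos (by omega)]; congr 1; omega
    have e2 : a lam (2*k+2) = c lam (k+1) := by
      simp only [a]; rw [if_pos (by omega)]; congr 1; omega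
    rw [e1, e2]
    have h := crec hlam k
    push_cast
    linear_combination h
  · obtain ⟨k, hk⟩ := hodd
    have e1 : a lam n = 0 := by simp only [a]; rw [if_neg (by omega)]
    have e2 : a lam (n+2) = 0 := by simp only [a]; rw [if_neg (by omega)]
    rw [e1, e2]; ring

include hlam in
lemma aRec (n : ℕ) : ((n:ℝ)+2) * a lam (n+2) = -(1/(2*(lam+1))) * a (lam+1) n := by
  rcases Nat.even_or_odd n with ⟨k, hk⟩ | hodd
  · have hn : n = 2 * k := by omega
    subst hn
    have e1 : a (lam+1) (2*k) = c (lam+1) k := by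
      simp only [a]; rw [if_pos (by omega)]; congr 1; omega
    have e2 : a lam (2*k+2) = c lam (k+1) := by
      simp only [a]; rw [if_pos (by omega)]; congr 1; omega
    rw [e1, e2]
    have h := crec2 hlam k
    push_cast
    linear_combination h
  · obtain ⟨k, hk⟩ := hodd
    have e1 : a (lam+1) n = 0 := by simp only [a]; rw [if_neg (by omega)]
    have e2 : a lam (n+2) = 0 := by simp only [a]; rw [if_neg (by omega)]
    rw [e1, e2]; ring

/-! ### shifted first-derivative series -/

include hlam in
lemma hasSum_yderiv' (y : ℝ) :
    HasSum (fun n : ℕ => ((n:ℝ) + 2) * a lam (n+2) * y ^ (n+2))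
      (y * deriv (besselJNorm lam) y) := by
  have hB0 := hasSum_yderiv hlam y
  have h0 : a lam (0+1) = 0 := by simp only [a]; rw [if_neg (by omega)]
  have hB1 : HasSum (fun n : ℕ => ((↑(n+1):ℝ) + 1) * a lam ((n+1)+1) * y ^ ((n+1)+1))
      (y * deriv (besselJNorm lam) y) := by
    refine (hasSum_nat_add_iff (f := fun m : ℕ => ((m:ℝ)+1) * a lam (m+1) * y^(m+1)) 1).mpr ?_
    rw [Finset.sum_range_one, h0, mul_zero, zero_mul, add_zero]
    exact hB0
  have heq : (fun n : ℕ => ((↑(n+1):ℝ) + 1) * a lam ((n+1)+1) * y ^ ((n+1)+1))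
      = fun n : ℕ => ((n:ℝ) + 2) * a lam (n+2) * y ^ (n+2) := by
    funext n; push_cast; ring_nf
  rw [heq] at hB1
  exact hB1

/-! ### The Bessel ODE -/

include hlam in
lemma besselODE (y : ℝ) :
    y^2 * deriv (deriv (besselJNorm lam)) y + (2*lam+1) * (y * deriv (besselJNorm lam) y)
      + y^2 * besselJNorm lam y = 0 := by
  have A := hasSum_y2deriv2 hlam y
  have B := (hasSum_yderiv' hlam y).mul_left (2*lam+1)
  have C := (hasSum_a hlam y).mul_left (y^2)
  have combo := (A.add B).add C
  have hzero : (fun n : ℕ => ((n:ℝ) + 1) * ((n:ℝ) + 2) * a lam (n+2) * y ^ (n+2)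
      + (2*lam+1) * (((n:ℝ) + 2) * a lam (n+2) * y ^ (n+2))
      + y^2 * (a lam n * y ^ n)) = fun _ => (0:ℝ) := by
    funext n
    have h := aODE hlam n
    have hy : y^2 * (a lam n * y^n) = a lam n * y^(n+2) := by rw [pow_add]; ring
    rw [hy]
    calc ((n:ℝ) + 1) * ((n:ℝ) + 2) * a lam (n+2) * y ^ (n+2)
          + (2*lam+1) * (((n:ℝ) + 2) * a lam (n+2) * y ^ (n+2)) + a lam n * y^(n+2)
        = (((n:ℝ)+1)*((n:ℝ)+2) * a lam (n+2)
            + (2*lam+1) * (((n:ℝ)+2) * a lam (n+2)) + a lam n) * y^(n+2) := by ring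
      _ = 0 := by rw [h]; ring
  rw [hzero] at combo
  have := hasSum_zero.unique combo
  linarith [this]

include hlam in
lemma deriv_j_eq : deriv (besselJNorm lam)
    = fun y => -(1/(2*(lam+1))) * y * besselJNorm (lam+1) y := by
  have hlam1 : -(1/2 : ℝ) ≤ lam + 1 := by linarith
  have key : ∀ y : ℝ, y * deriv (besselJNorm lam) y
      = -(1/(2*(lam+1))) * y^2 * besselJNorm (lam+1) y := by
    intro y
    have B := hasSum_yderiv' hlam y
    have C := (hasSum_a hlam1 y).mul_left (-(1/(2*(lam+1))) * y^2)
    have heq : (fun n : ℕ => -(1/(2*(lam+1))) * y^2 * (a (lam+1) n * y ^ n))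
        = fun n : ℕ => ((n:ℝ) + 2) * a lam (n+2) * y ^ (n+2) := by
      funext n
      rw [aRec hlam n, pow_add]
      ring
    rw [heq] at C
    exact B.unique C
  apply Continuous.ext_on (dense_compl_singleton (0:ℝ))
  · exact (contDiff_j hlam).continuous_deriv le_top
  · exact (continuous_const.mul continuous_id).mul (contDiff_j hlam1).continuous
  · intro y hy
    have hy0 : y ≠ 0 := hy
    refine mul_left_cancel₀ hy0 ?_
    rw [key y]
    ring

/-! ### Liouville transform and energy -/

def uu (lam : ℝ) (t : ℝ) : ℝ := t ^ (lam + 1/2) * besselJNorm lam t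

def vv (lam : ℝ) (t : ℝ) : ℝ :=
  (lam+1/2) * t ^ (lam - 1/2) * besselJNorm lam t
    + t ^ (lam + 1/2) * deriv (besselJNorm lam) t

def ww (lam : ℝ) (t : ℝ) : ℝ :=
  (lam+1/2) * ((lam - 1/2) * t ^ (lam - 3/2) * besselJNorm lam t
      + t ^ (lam - 1/2) * deriv (besselJNorm lam) t)
    + ((lam+1/2) * t ^ (lam - 1/2) * deriv (besselJNorm lam) t
      + t ^ (lam + 1/2) * deriv (deriv (besselJNorm lam)) t)

def EE (lam : ℝ) (t : ℝ) : ℝ := vv lam t * vv lam t + uu lam t * uu lam t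

def KK (lam : ℝ) : ℝ := |(lam+1/2)*(lam-1/2)|

def FF (lam : ℝ) (t : ℝ) : ℝ := EE lam t * Real.exp (KK lam / t)

include hlam in
lemma contDiff_dj : ContDiff ℝ ⊤ (deriv (besselJNorm lam)) := by
  rw [contDiff_iff_contDiffAt]
  intro x
  exact (((hbj' hlam)).analyticAt_of_mem (by simp)).contDiffAt

include hlam in
lemma hasDerivAt_uu {t : ℝ} (ht : 0 < t) : HasDerivAt (uu lam) (vv lam t) t := by
  have h1 : HasDerivAt (fun s : ℝ => s ^ (lam + 1/2)) ((lam+1/2) * t ^ (lam + 1/2 - 1)) t :=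
    Real.hasDerivAt_rpow_const (Or.inl (ne_of_gt ht))
  have h2 : HasDerivAt (besselJNorm lam) (deriv (besselJNorm lam) t) t :=
    ((contDiff_j hlam).differentiable (by simp) t).hasDerivAt
  have h3 := h1.mul h2
  have he : lam + 1/2 - 1 = lam - 1/2 := by ring
  rw [he] at h3
  exact h3

include hlam in
lemma hasDerivAt_vv {t : ℝ} (ht : 0 < t) : HasDerivAt (vv lam) (ww lam t) t := by
  have h2 : HasDerivAt (besselJNorm lam) (deriv (besselJNorm lam) t) t :=
    ((contDiff_j hlam).differentiable (by simp) t).hasDerivAt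
  have h3 : HasDerivAt (deriv (besselJNorm lam)) (deriv (deriv (besselJNorm lam)) t) t :=
    ((contDiff_dj hlam).differentiable (by simp) t).hasDerivAt
  have h1a : HasDerivAt (fun s : ℝ => s ^ (lam - 1/2)) ((lam - 1/2) * t ^ (lam - 3/2)) t := by
    have := Real.hasDerivAt_rpow_const (x := t) (p := lam - 1/2) (Or.inl (ne_of_gt ht))
    have he : lam - 1/2 - 1 = lam - 3/2 := by ring
    rwa [he] at this
  have h1b : HasDerivAt (fun s : ℝ => s ^ (lam + 1/2)) ((lam + 1/2) * t ^ (lam - 1/2)) t := by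
    have := Real.hasDerivAt_rpow_const (x := t) (p := lam + 1/2) (Or.inl (ne_of_gt ht))
    have he : lam + 1/2 - 1 = lam - 1/2 := by ring
    rwa [he] at this
  have hA := ((h1a.const_mul (lam+1/2)).mul h2)
  have hB := h1b.mul h3
  have h := hA.add hB
  have hval : (lam + 1/2) * ((lam - 1/2) * t ^ (lam - 3/2)) * besselJNorm lam t
      + (lam + 1/2) * t ^ (lam - 1/2) * deriv (besselJNorm lam) t
      + ((lam + 1/2) * t ^ (lam - 1/2) * deriv (besselJNorm lam) t
        + t ^ (lam + 1/2) * deriv (deriv (besselJNorm lam)) t) = ww lam t := by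
    rw [ww]; ring
  rw [hval] at h
  exact h

include hlam in
lemma ww_key {t : ℝ} (ht : 0 < t) :
    t^2 * ww lam t = (lam+1/2)*(lam-1/2) * uu lam t - t^2 * uu lam t := by
  have hode := besselODE hlam t
  have e1 : t ^ (lam + 1/2) = t ^ (lam - 3/2) * t^2 := by
    rw [show t^2 = t ^ ((2:ℕ):ℝ) from (Real.rpow_natCast t 2).symm,
      ← Real.rpow_add ht]
    congr 1
    ring
  have e2 : t ^ (lam - 1/2) = t ^ (lam - 3/2) * t := by
    have h := Real.rpow_add ht (lam - 3/2) 1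
    rw [Real.rpow_one] at h
    rw [show lam - 1/2 = lam - 3/2 + 1 by ring, h]
  rw [ww, uu, e1, e2]
  linear_combination (t ^ (lam - 3/2)) * t^2 * hode

include hlam in
lemma hasDerivAt_EE {t : ℝ} (ht : 0 < t) :
    HasDerivAt (EE lam)
      (ww lam t * vv lam t + vv lam t * ww lam t
        + (vv lam t * uu lam t + uu lam t * vv lam t)) t := by
  have hu := hasDerivAt_uu hlam ht
  have hv := hasDerivAt_vv hlam ht
  exact (hv.mul hv).add (hu.mul hu)

include hlam in
lemma hasDerivAt_FF {t : ℝ} (ht : 0 < t) :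
    HasDerivAt (FF lam)
      ((ww lam t * vv lam t + vv lam t * ww lam t
        + (vv lam t * uu lam t + uu lam t * vv lam t)) * Real.exp (KK lam / t)
       + EE lam t * (Real.exp (KK lam / t) * (KK lam * -(t^2)⁻¹))) t := by
  have hE := hasDerivAt_EE hlam ht
  have hg : HasDerivAt (fun s : ℝ => KK lam / s) (KK lam * -(t^2)⁻¹) t := by
    have := (hasDerivAt_inv (ne_of_gt ht)).const_mul (KK lam)
    simpa [div_eq_mul_inv] using this
  have hexp := hg.exp
  exact hE.mul hexp

include hlam in
lemma deriv_FF_nonpos {t : ℝ} (ht : 0 < t) : deriv (FF lam) t ≤ 0 := by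
  have hF := hasDerivAt_FF hlam ht
  rw [hF.deriv]
  have hkey := ww_key hlam ht
  have hexp : 0 < Real.exp (KK lam / t) := Real.exp_pos _
  have ht2 : (0:ℝ) < t^2 := by positivity
  rw [show (ww lam t * vv lam t + vv lam t * ww lam t
        + (vv lam t * uu lam t + uu lam t * vv lam t)) * Real.exp (KK lam / t)
       + EE lam t * (Real.exp (KK lam / t) * (KK lam * -(t^2)⁻¹))
      = Real.exp (KK lam / t) * ((2 * (ww lam t) * (vv lam t) + 2 * (uu lam t) * (vv lam t))
          - KK lam * EE lam t / t^2) by field_simp; ring]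
  apply mul_nonpos_of_nonneg_of_nonpos (le_of_lt hexp)
  have h1 : 2 * ww lam t * vv lam t + 2 * uu lam t * vv lam t
      = (2 * ((lam+1/2)*(lam-1/2)) * (uu lam t * vv lam t)) / t^2 := by
    rw [eq_div_iff (ne_of_gt ht2)]
    linear_combination (2 * vv lam t) * hkey
  rw [h1, div_sub_div_same]
  apply div_nonpos_of_nonpos_of_nonneg _ (le_of_lt ht2)
  have h2 : 2 * ((lam+1/2)*(lam-1/2)) * (uu lam t * vv lam t) ≤ KK lam * EE lam t := by
    rw [EE, KK]
    nlinarith [sq_nonneg (uu lam t - vv lam t), sq_nonneg (uu lam t + vv lam t),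
      le_abs_self ((lam+1/2)*(lam-1/2)), neg_abs_le ((lam+1/2)*(lam-1/2))]
  linarith

include hlam in
lemma FF_anti : AntitoneOn (FF lam) (Set.Ici 1) := by
  have hcont : ContinuousOn (FF lam) (Set.Ici 1) := by
    intro x hx
    have hx1 : (0:ℝ) < x := lt_of_lt_of_le one_pos hx
    exact ((hasDerivAt_FF hlam hx1).continuousAt).continuousWithinAt
  apply antitoneOn_of_deriv_nonpos (convex_Ici 1) hcont
  · intro x hx
    rw [interior_Ici] at hx
    have hx1 : (0:ℝ) < x := lt_trans one_pos hx
    exact (hasDerivAt_FF hlam hx1).differentiableAt.differentiableWithinAt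
  · intro x hx
    rw [interior_Ici] at hx
    exact deriv_FF_nonpos hlam (lt_trans one_pos hx)

include hlam in
lemma u_sq_le {t : ℝ} (ht : 1 ≤ t) : uu lam t * uu lam t ≤ FF lam 1 := by
  have ht0 : (0:ℝ) < t := lt_of_lt_of_le one_pos ht
  have h1 : uu lam t * uu lam t ≤ EE lam t := by
    rw [EE]; nlinarith [mul_self_nonneg (vv lam t)]
  have h2 : EE lam t ≤ FF lam t := by
    rw [FF]
    have hK : 0 ≤ KK lam / t := div_nonneg (abs_nonneg _) (le_of_lt ht0)
    have he : 1 ≤ Real.exp (KK lam / t) := Real.one_le_exp hK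
    have hE : 0 ≤ EE lam t := by
      rw [EE]; nlinarith [mul_self_nonneg (vv lam t), mul_self_nonneg (uu lam t)]
    nlinarith
  have h3 : FF lam t ≤ FF lam 1 := FF_anti hlam (Set.self_mem_Ici) ht ht
  linarith

include hlam in
lemma j_decay_far {t : ℝ} (ht : 1 ≤ t) :
    |besselJNorm lam t| ≤ Real.sqrt (FF lam 1) * t ^ (-(lam + 1/2)) := by
  have ht0 : (0:ℝ) < t := lt_of_lt_of_le one_pos ht
  have htp : (0:ℝ) < t ^ (lam + 1/2) := Real.rpow_pos_of_pos ht0 _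
  have husq := u_sq_le hlam ht
  have habs : |uu lam t| ≤ Real.sqrt (FF lam 1) := by
    rw [← Real.sqrt_mul_self_eq_abs]
    exact Real.sqrt_le_sqrt husq
  have huu : |uu lam t| = t ^ (lam + 1/2) * |besselJNorm lam t| := by
    rw [uu, abs_mul, abs_of_pos htp]
  rw [huu] at habs
  have hdiv : |besselJNorm lam t| ≤ Real.sqrt (FF lam 1) / t ^ (lam + 1/2) := by
    rw [le_div_iff₀ htp]
    linarith [habs]
  rw [Real.rpow_neg (le_of_lt ht0), ← div_eq_mul_inv]
  exact hdiv

include hlam in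
lemma j_decay : ∃ C : ℝ, 0 < C ∧ ∀ t : ℝ, 0 ≤ t →
    |besselJNorm lam t| ≤ C * (1 + t) ^ (-(lam + 1/2)) := by
  obtain ⟨B, hB⟩ := (isCompact_Icc (a := (0:ℝ)) (b := 1)).exists_bound_of_continuousOn
    ((contDiff_j hlam).continuous.continuousOn)
  set M := Real.sqrt (FF lam 1) with hM
  set D := max (max B M) 0 + 1 with hDdef
  have hD : 0 < D := by
    have : (0:ℝ) ≤ max (max B M) 0 := le_max_right _ _
    rw [hDdef]; linarith
  have h2pow : (0:ℝ) < 2 ^ (lam + 1/2) := Real.rpow_pos_of_pos two_pos _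
  refine ⟨D * 2 ^ (lam + 1/2), mul_pos hD h2pow, ?_⟩
  intro t ht
  have hmu : 0 ≤ lam + 1/2 := by linarith
  have h1t : (0:ℝ) < 1 + t := by linarith
  have h1tp : (0:ℝ) < (1+t) ^ (lam + 1/2) := Real.rpow_pos_of_pos h1t _
  have hpownn : (0:ℝ) ≤ (1+t) ^ (-(lam + 1/2)) := le_of_lt (Real.rpow_pos_of_pos h1t _)
  rcases le_or_gt t 1 with hle | hgt
  · have hBt : |besselJNorm lam t| ≤ B := by
      simpa [Real.norm_eq_abs] using hB t ⟨ht, hle⟩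
    have h2 : (1+t) ^ (lam + 1/2) ≤ 2 ^ (lam + 1/2) :=
      Real.rpow_le_rpow (le_of_lt h1t) (by linarith) hmu
    have h4 : (1:ℝ) ≤ 2 ^ (lam + 1/2) / (1+t) ^ (lam + 1/2) := (one_le_div h1tp).mpr h2
    have hBD : B ≤ D := by
      have := le_max_left B M
      have := le_max_left (max B M) (0:ℝ)
      rw [hDdef]; linarith
    calc |besselJNorm lam t| ≤ B := hBt
      _ ≤ D := hBD
      _ = D * 1 := (mul_one D).symm
      _ ≤ D * (2 ^ (lam + 1/2) / (1+t) ^ (lam + 1/2)) :=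
          mul_le_mul_of_nonneg_left h4 (le_of_lt hD)
      _ = D * 2 ^ (lam + 1/2) * (1+t) ^ (-(lam + 1/2)) := by
          rw [Real.rpow_neg (le_of_lt h1t)]; ring
  · have ht0 : (0:ℝ) < t := lt_trans one_pos hgt
    have htp : (0:ℝ) < t ^ (lam + 1/2) := Real.rpow_pos_of_pos ht0 _
    have h5 := j_decay_far hlam (le_of_lt hgt)
    have hMD : M ≤ D := by
      have := le_max_right B M
      have := le_max_left (max B M) (0:ℝ)
      rw [hDdef]; linarith
    have hA : (1+t) ^ (lam + 1/2) ≤ 2 ^ (lam + 1/2) * t ^ (lam + 1/2) := by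
      rw [← Real.mul_rpow (by norm_num) (le_of_lt ht0)]
      exact Real.rpow_le_rpow (le_of_lt h1t) (by linarith) hmu
    have h6 : t ^ (-(lam + 1/2)) ≤ 2 ^ (lam + 1/2) * (1+t) ^ (-(lam + 1/2)) := by
      rw [Real.rpow_neg (le_of_lt ht0), Real.rpow_neg (le_of_lt h1t),
        ← div_eq_mul_inv, inv_eq_one_div, div_le_div_iff₀ htp h1tp, one_mul]
      linarith [hA]
    have hMnn : (0:ℝ) ≤ M := Real.sqrt_nonneg _
    calc |besselJNorm lam t| ≤ M * t ^ (-(lam + 1/2)) := h5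
      _ ≤ M * (2 ^ (lam + 1/2) * (1+t) ^ (-(lam + 1/2))) :=
          mul_le_mul_of_nonneg_left h6 hMnn
      _ = (M * 2 ^ (lam + 1/2)) * (1+t) ^ (-(lam + 1/2)) := by ring
      _ ≤ (D * 2 ^ (lam + 1/2)) * (1+t) ^ (-(lam + 1/2)) := by
          apply mul_le_mul_of_nonneg_right _ hpownn
          exact mul_le_mul_of_nonneg_right hMD (le_of_lt h2pow)

/-! ### Iterated derivative lemmas -/

lemma iteratedDeriv_cmul {g : ℝ → ℝ} (hg : ContDiff ℝ ⊤ g) (C : ℝ) (n : ℕ) :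
    iteratedDeriv n (fun s => C * g s) = fun t => C * iteratedDeriv n g t := by
  induction n with
  | zero => simp
  | succ n ih =>
    funext t
    rw [iteratedDeriv_succ, ih, iteratedDeriv_succ]
    apply deriv_const_mul
    exact (hg.differentiable_iteratedDeriv n (by exact_mod_cast WithTop.coe_lt_top (n:ℕ∞))).differentiableAt

lemma iteratedDeriv_id_mul {g : ℝ → ℝ} (hg : ContDiff ℝ ⊤ g) (n : ℕ) :
    iteratedDeriv n (fun s => s * g s)
      = fun t => t * iteratedDeriv n g t + n * iteratedDeriv (n-1) g t := by
  induction n with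
  | zero => funext t; simp
  | succ n ih =>
    funext t
    have hdiff : ∀ m : ℕ, Differentiable ℝ (iteratedDeriv m g) := fun m =>
      hg.differentiable_iteratedDeriv m (by exact_mod_cast WithTop.coe_lt_top (m:ℕ∞))
    rw [iteratedDeriv_succ, ih]
    have h1 : HasDerivAt (fun s : ℝ => s * iteratedDeriv n g s)
        (1 * iteratedDeriv n g t + t * deriv (iteratedDeriv n g) t) t :=
      (hasDerivAt_id t).mul ((hdiff n t).hasDerivAt)
    have h2 : HasDerivAt (fun s : ℝ => (n:ℝ) * iteratedDeriv (n-1) g s)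
        ((n:ℝ) * deriv (iteratedDeriv (n-1) g) t) t :=
      ((hdiff (n-1) t).hasDerivAt).const_mul (n:ℝ)
    have h3 : deriv (fun s => s * iteratedDeriv n g s + (n:ℝ) * iteratedDeriv (n-1) g s) t = _ :=
      (h1.add h2).deriv
    rw [h3, ← iteratedDeriv_succ]
    rcases Nat.eq_zero_or_pos n with hn | hn
    · subst hn
      rw [show (0:ℕ)+1-1 = 0 from rfl]
      push_cast
      ring
    · have he : n - 1 + 1 = n := Nat.succ_pred_eq_of_pos hn
      rw [← iteratedDeriv_succ, he, Nat.add_sub_cancel]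
      push_cast
      ring

/-! ### Main theorem -/

lemma main_bound : ∀ n : ℕ, ∀ lam : ℝ, -(1/2 : ℝ) ≤ lam → ∃ C : ℝ, 0 < C ∧ ∀ t : ℝ, 0 ≤ t →
    |iteratedDeriv n (besselJNorm lam) t| ≤ C * (1 + t) ^ (-(lam + 1/2)) := by
  intro n
  induction n using Nat.strong_induction_on with
  | _ n ih =>
    match n with
    | 0 =>
      intro lam hlam
      simpa only [iteratedDeriv_zero] using j_decay hlam
    | (m+1) =>
      intro lam hlam
      have hlam1 : -(1/2:ℝ) ≤ lam + 1 := by linarith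
      obtain ⟨C₁, hC₁, hb₁⟩ := ih m (by omega) (lam+1) hlam1
      obtain ⟨C₂, hC₂, hb₂⟩ := ih (m-1) (by omega) (lam+1) hlam1
      have hg : ContDiff ℝ ⊤ (besselJNorm (lam+1)) := contDiff_j hlam1
      refine ⟨|(-(1/(2*(lam+1))))| * (C₁ + m * C₂) + 1, by positivity, ?_⟩
      intro t ht
      have hrw : iteratedDeriv (m+1) (besselJNorm lam) t
          = -(1/(2*(lam+1))) * (t * iteratedDeriv m (besselJNorm (lam+1)) t
              + m * iteratedDeriv (m-1) (besselJNorm (lam+1)) t) := by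
        rw [iteratedDeriv_succ', deriv_j_eq hlam]
        have hfe : (fun y => -(1/(2*(lam+1))) * y * besselJNorm (lam+1) y)
            = fun y => -(1/(2*(lam+1))) * (y * besselJNorm (lam+1) y) := by
          funext y; ring
        have hsg : ContDiff ℝ ⊤ (fun y => y * besselJNorm (lam+1) y) :=
          contDiff_id.mul hg
        rw [hfe, iteratedDeriv_cmul hsg, iteratedDeriv_id_mul hg]
      rw [hrw]
      have h1t : (0:ℝ) < 1 + t := by linarith
      have hPnn : (0:ℝ) ≤ (1+t) ^ (-(lam + 1/2)) :=
        le_of_lt (Real.rpow_pos_of_pos h1t _)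
      have hsplit : (1+t) ^ (-(lam + 1/2)) = (1+t) ^ (-(lam + 1 + 1/2)) * (1+t) := by
        rw [show -(lam + 1/2) = -(lam + 1 + 1/2) + 1 by ring,
          Real.rpow_add_one (ne_of_gt h1t)]
      have hmono : (1+t) ^ (-(lam + 1 + 1/2)) ≤ (1+t) ^ (-(lam + 1/2)) :=
        Real.rpow_le_rpow_of_exponent_le (by linarith) (by linarith)
      have e1 : |t * iteratedDeriv m (besselJNorm (lam+1)) t|
          ≤ C₁ * (1+t) ^ (-(lam + 1/2)) := by
        rw [abs_mul, abs_of_nonneg ht]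
        calc t * |iteratedDeriv m (besselJNorm (lam+1)) t|
            ≤ (1+t) * (C₁ * (1+t) ^ (-(lam + 1 + 1/2))) :=
              mul_le_mul (by linarith) (hb₁ t ht) (abs_nonneg _) (by linarith)
          _ = C₁ * ((1+t) ^ (-(lam + 1 + 1/2)) * (1+t)) := by ring
          _ = C₁ * (1+t) ^ (-(lam + 1/2)) := by rw [← hsplit]
      have e2 : |(m:ℝ) * iteratedDeriv (m-1) (besselJNorm (lam+1)) t|
          ≤ (m:ℝ) * (C₂ * (1+t) ^ (-(lam + 1/2))) := by
        rw [abs_mul, Nat.abs_cast]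
        apply mul_le_mul_of_nonneg_left _ (Nat.cast_nonneg m)
        calc |iteratedDeriv (m-1) (besselJNorm (lam+1)) t|
            ≤ C₂ * (1+t) ^ (-(lam + 1 + 1/2)) := hb₂ t ht
          _ ≤ C₂ * (1+t) ^ (-(lam + 1/2)) :=
              mul_le_mul_of_nonneg_left hmono (le_of_lt hC₂)
      calc |(-(1/(2*(lam+1)))) * (t * iteratedDeriv m (besselJNorm (lam+1)) t
              + m * iteratedDeriv (m-1) (besselJNorm (lam+1)) t)|
          = |(-(1/(2*(lam+1))))| * |t * iteratedDeriv m (besselJNorm (lam+1)) t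
              + m * iteratedDeriv (m-1) (besselJNorm (lam+1)) t| := abs_mul _ _
        _ ≤ |(-(1/(2*(lam+1))))| * (|t * iteratedDeriv m (besselJNorm (lam+1)) t|
              + |(m:ℝ) * iteratedDeriv (m-1) (besselJNorm (lam+1)) t|) :=
            mul_le_mul_of_nonneg_left (abs_add_le _ _) (abs_nonneg _)
        _ ≤ |(-(1/(2*(lam+1))))| * (C₁ * (1+t) ^ (-(lam + 1/2))
              + (m:ℝ) * (C₂ * (1+t) ^ (-(lam + 1/2)))) :=
            mul_le_mul_of_nonneg_left (add_le_add e1 e2) (abs_nonneg _)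
        _ = (|(-(1/(2*(lam+1))))| * (C₁ + m * C₂)) * (1+t) ^ (-(lam + 1/2)) := by ring
        _ ≤ (|(-(1/(2*(lam+1))))| * (C₁ + m * C₂) + 1) * (1+t) ^ (-(lam + 1/2)) :=
            mul_le_mul_of_nonneg_right (by linarith) hPnn

end BesselAux


/-- For every `λ ≥ −1/2` and `n ∈ ℕ` there is `C = C(λ,n)` with
`|j_λ^{(n)}(t)| ≤ C (1+t)^{−(λ+1/2)}` for all `t ≥ 0`. -/
theorem stmt1 (lam : ℝ) (hlam : -(1 / 2 : ℝ) ≤ lam) (n : ℕ) :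
    ∃ C : ℝ, 0 < C ∧ ∀ t : ℝ, 0 ≤ t →
      |iteratedDeriv n (besselJNorm lam) t| ≤ C * (1 + t) ^ (-(lam + 1 / 2)) :=
  BesselAux.main_bound n lam hlam
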